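/- Let 1/√2 < α < 1, β = √(1−α²), N ≥ 2, and P_fail = (α²−β²)^{N−1}. For the distilled assemblage Σ^dist, the x = 0 contribution to the singlet-assemblage fraction equals Σ_{a∈{0,1}} F(σ^dist_{a|0}, σ^{Φ+}_{a|0}) = ½(√(1 + P_fail(α²−β²)) + √(1 − P_fail(α²−β²))). -/

import Mathlib

open Matrix Finset
open scoped ComplexOrder

/-- Positive-semidefinite square root of a matrix (defined as `0` if the matrix
is not positive semidefinite). -/
noncomputable def matSqrt {d : ℕ} (A : Matrix (Fin d) (Fin d) ℂ) :
    Matrix (Fin d) (Fin d) ℂ :=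
  open Classical in
  if h : A.PosSemidef then
    (h.1.eigenvectorUnitary : Matrix (Fin d) (Fin d) ℂ) *
      diagonal ((↑) ∘ (fun x : ℝ => Real.sqrt x) ∘ h.1.eigenvalues) *
      (star (h.1.eigenvectorUnitary : Matrix (Fin d) (Fin d) ℂ))
  else 0

/-- Fidelity between positive semidefinite matrices: `F(A,B) = Tr[√(√A · B · √A)]`. -/
noncomputable def mFid {d : ℕ} (A B : Matrix (Fin d) (Fin d) ℂ) : ℝ :=
  (matSqrt (matSqrt A * B * matSqrt A)).trace.re

/-- The standard basis vector `|0⟩` of `ℂ²`. -/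
def e0 : Fin 2 → ℂ := ![1, 0]

/-- The standard basis vector `|1⟩` of `ℂ²`. -/
def e1 : Fin 2 → ℂ := ![0, 1]

/-- The projector `|0⟩⟨0|`. -/
def P00 : Matrix (Fin 2) (Fin 2) ℂ := vecMulVec e0 (star e0)

/-- The projector `|1⟩⟨1|`. -/
def P11 : Matrix (Fin 2) (Fin 2) ℂ := vecMulVec e1 (star e1)

/-- The Kraus operator `K⁰ = (β/α)|0⟩⟨0| + |1⟩⟨1|` of the successful filter outcome. -/
noncomputable def K0 (α β : ℝ) : Matrix (Fin 2) (Fin 2) ℂ :=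
  ((β / α : ℝ) : ℂ) • P00 + P11

/-- The Kraus operator `K¹ = (√(α²−β²)/α)|0⟩⟨0|` of the failed filter outcome. -/
noncomputable def K1 (α β : ℝ) : Matrix (Fin 2) (Fin 2) ℂ :=
  ((Real.sqrt (α ^ 2 - β ^ 2) / α : ℝ) : ℂ) • P00

/-- Bob's reduced state `ρ_B = α²|0⟩⟨0| + β²|1⟩⟨1|` of the assemblage `Σ^(α)`. -/
noncomputable def ρB (α β : ℝ) : Matrix (Fin 2) (Fin 2) ℂ :=
  ((α ^ 2 : ℝ) : ℂ) • P00 + ((β ^ 2 : ℝ) : ℂ) • P11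

/-- The vector `|α₊⟩ = α|0⟩ + β|1⟩`. -/
def ketαp (α β : ℝ) : Fin 2 → ℂ := ![(α : ℂ), (β : ℂ)]

/-- The vector `|α₋⟩ = α|0⟩ − β|1⟩`. -/
def ketαm (α β : ℝ) : Fin 2 → ℂ := ![(α : ℂ), -(β : ℂ)]

/-- The vector `|+⟩ = (|0⟩+|1⟩)/√2`. -/
noncomputable def ketp : Fin 2 → ℂ :=
  ![(1 / Real.sqrt 2 : ℝ), (1 / Real.sqrt 2 : ℝ)]

/-- The vector `|−⟩ = (|0⟩−|1⟩)/√2`. -/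
noncomputable def ketm : Fin 2 → ℂ :=
  ![(1 / Real.sqrt 2 : ℝ), (-(1 / Real.sqrt 2) : ℝ)]

/-- The assemblage `Σ^(α)` with components `σ^(α)_{a|x}` (first index `a`, second `x`):
`σ^(α)_{0|0} = α²|0⟩⟨0|`, `σ^(α)_{1|0} = β²|1⟩⟨1|`,
`σ^(α)_{0|1} = ½|α₊⟩⟨α₊|`, `σ^(α)_{1|1} = ½|α₋⟩⟨α₋|`. -/
noncomputable def σα (α β : ℝ) (a x : Fin 2) : Matrix (Fin 2) (Fin 2) ℂ :=
  if x = 0 then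
    if a = 0 then ((α ^ 2 : ℝ) : ℂ) • P00 else ((β ^ 2 : ℝ) : ℂ) • P11
  else
    if a = 0 then (1 / 2 : ℂ) • vecMulVec (ketαp α β) (star (ketαp α β))
    else (1 / 2 : ℂ) • vecMulVec (ketαm α β) (star (ketαm α β))

/-- The singlet assemblage `Σ^{Φ⁺}` with components
`σ^{Φ⁺}_{0|0} = ½|0⟩⟨0|`, `σ^{Φ⁺}_{1|0} = ½|1⟩⟨1|`,
`σ^{Φ⁺}_{0|1} = ½|+⟩⟨+|`, `σ^{Φ⁺}_{1|1} = ½|−⟩⟨−|`. -/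
noncomputable def σΦ (a x : Fin 2) : Matrix (Fin 2) (Fin 2) ℂ :=
  if x = 0 then
    if a = 0 then (1 / 2 : ℂ) • P00 else (1 / 2 : ℂ) • P11
  else
    if a = 0 then (1 / 2 : ℂ) • vecMulVec ketp (star ketp)
    else (1 / 2 : ℂ) • vecMulVec ketm (star ketm)

/-- The distilled assemblage `Σ^dist` obtained on average from the `N`-copy protocol,
with `P_fail = (α²−β²)^{N−1}` and `P_success = 1 − P_fail`:
`σ^dist_{0|0} = (½P_success + α²P_fail)|0⟩⟨0|`,
`σ^dist_{1|0} = (½P_success + β²P_fail)|1⟩⟨1|`,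
`σ^dist_{0|1} = ½(P_success|+⟩⟨+| + P_fail|α₊⟩⟨α₊|)`,
`σ^dist_{1|1} = ½(P_success|−⟩⟨−| + P_fail|α₋⟩⟨α₋|)`. -/
noncomputable def σdist (α β : ℝ) (N : ℕ) (a x : Fin 2) : Matrix (Fin 2) (Fin 2) ℂ :=
  let Pfail : ℝ := (α ^ 2 - β ^ 2) ^ (N - 1)
  let Psuccess : ℝ := 1 - Pfail
  if x = 0 then
    if a = 0 then ((1 / 2 * Psuccess + α ^ 2 * Pfail : ℝ) : ℂ) • P00
    else ((1 / 2 * Psuccess + β ^ 2 * Pfail : ℝ) : ℂ) • P11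
  else
    if a = 0 then
      (1 / 2 : ℂ) • (((Psuccess : ℝ) : ℂ) • vecMulVec ketp (star ketp) +
        ((Pfail : ℝ) : ℂ) • vecMulVec (ketαp α β) (star (ketαp α β)))
    else
      (1 / 2 : ℂ) • (((Psuccess : ℝ) : ℂ) • vecMulVec ketm (star ketm) +
        ((Pfail : ℝ) : ℂ) • vecMulVec (ketαm α β) (star (ketαm α β)))

lemma psd_smul {A : Matrix (Fin 2) (Fin 2) ℂ} (hA : A.PosSemidef) {c : ℝ} (hc : 0 ≤ c) :
    (((c:ℝ):ℂ) • A).PosSemidef := by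
  refine Matrix.PosSemidef.of_dotProduct_mulVec_nonneg ?_ ?_
  · unfold Matrix.IsHermitian
    rw [conjTranspose_smul, hA.1]
    congr 1
    simp
  · intro x
    rw [smul_mulVec, dotProduct_smul, smul_eq_mul]
    exact mul_nonneg (by exact_mod_cast hc) (hA.dotProduct_mulVec_nonneg x)

lemma P00_psd : P00.PosSemidef := by
  refine Matrix.PosSemidef.of_dotProduct_mulVec_nonneg ?_ ?_
  · ext i j
    fin_cases i <;> fin_cases j <;> simp [P00, e0, vecMulVec, conjTranspose]
  · intro x
    have h : star x ⬝ᵥ P00 *ᵥ x = star (x 0) * x 0 := by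
      simp [P00, e0, vecMulVec, dotProduct, mulVec, Fin.sum_univ_two]
    rw [h]
    exact star_mul_self_nonneg _

lemma P11_psd : P11.PosSemidef := by
  refine Matrix.PosSemidef.of_dotProduct_mulVec_nonneg ?_ ?_
  · ext i j
    fin_cases i <;> fin_cases j <;> simp [P11, e1, vecMulVec, conjTranspose]
  · intro x
    have h : star x ⬝ᵥ P11 *ᵥ x = star (x 1) * x 1 := by
      simp [P11, e1, vecMulVec, dotProduct, mulVec, Fin.sum_univ_two]
    rw [h]
    exact star_mul_self_nonneg _

lemma P00_mul : P00 * P00 = P00 := by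
  ext i j
  fin_cases i <;> fin_cases j <;>
    simp [P00, e0, vecMulVec, Matrix.mul_apply, Fin.sum_univ_two]

lemma P11_mul : P11 * P11 = P11 := by
  ext i j
  fin_cases i <;> fin_cases j <;>
    simp [P11, e1, vecMulVec, Matrix.mul_apply, Fin.sum_univ_two]

lemma P00_trace : P00.trace = 1 := by
  simp [P00, e0, vecMulVec, Matrix.trace, Matrix.diag, Fin.sum_univ_two]

lemma P11_trace : P11.trace = 1 := by
  simp [P11, e1, vecMulVec, Matrix.trace, Matrix.diag, Fin.sum_univ_two]

open scoped MatrixOrder in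
lemma matSqrt_smul {P : Matrix (Fin 2) (Fin 2) ℂ} (hP : P.PosSemidef) (hP2 : P * P = P)
    {c : ℝ} (hc : 0 ≤ c) : matSqrt (((c:ℝ):ℂ) • P) = ((Real.sqrt c : ℝ):ℂ) • P := by
  have h1 := psd_smul hP hc
  have h2 := psd_smul hP (Real.sqrt_nonneg c)
  rw [matSqrt, dif_pos h1]
  have e : (h1.1.eigenvectorUnitary : Matrix (Fin 2) (Fin 2) ℂ) *
      diagonal ((↑) ∘ (fun x : ℝ => Real.sqrt x) ∘ h1.1.eigenvalues) *
      (star (h1.1.eigenvectorUnitary : Matrix (Fin 2) (Fin 2) ℂ))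
      = cfc Real.sqrt (((c:ℝ):ℂ) • P) := by
    rw [h1.1.cfc_eq, Matrix.IsHermitian.cfc, Unitary.conjStarAlgAut_apply]
    rfl
  rw [e, ← cfcₙ_eq_cfc (hf0 := Real.sqrt_zero),
    ← CFC.sqrt_eq_real_sqrt _ h1.nonneg]
  refine CFC.sqrt_unique ?_ h2.nonneg
  rw [Matrix.smul_mul, Matrix.mul_smul, hP2, smul_smul, ← Complex.ofReal_mul,
    Real.mul_self_sqrt hc]

lemma mFid_proj {P : Matrix (Fin 2) (Fin 2) ℂ} (hP : P.PosSemidef) (hP2 : P * P = P)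
    (htr : P.trace = 1) {c d : ℝ} (hc : 0 ≤ c) (hd : 0 ≤ d) :
    mFid (((c:ℝ):ℂ) • P) (((d:ℝ):ℂ) • P) = Real.sqrt (c * d) := by
  rw [mFid, matSqrt_smul hP hP2 hc]
  have key : (((Real.sqrt c : ℝ):ℂ) • P) * (((d:ℝ):ℂ) • P) * (((Real.sqrt c : ℝ):ℂ) • P)
      = ((c * d : ℝ):ℂ) • P := by
    simp only [Matrix.smul_mul, Matrix.mul_smul, hP2, smul_smul]
    congr 1
    norm_cast
    nlinarith [Real.mul_self_sqrt hc]
  rw [key, matSqrt_smul hP hP2 (mul_nonneg hc hd), Matrix.trace_smul, smul_eq_mul, htr,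
    mul_one, Complex.ofReal_re]

/-- The `x = 0` contribution to the singlet-assemblage fraction of the
distilled assemblage equals `½(√(1 + P_fail(α²−β²)) + √(1 − P_fail(α²−β²)))`. -/
theorem distilled_fraction_x0 (α β : ℝ) (hα2 : 1 / Real.sqrt 2 < α) (hα : α < 1)
    (hβ : β = Real.sqrt (1 - α ^ 2)) (N : ℕ) (hN : 2 ≤ N) :
    ∑ a, mFid (σdist α β N a 0) (σΦ a 0) =
      1 / 2 * (Real.sqrt (1 + (α ^ 2 - β ^ 2) ^ (N - 1) * (α ^ 2 - β ^ 2)) +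
        Real.sqrt (1 - (α ^ 2 - β ^ 2) ^ (N - 1) * (α ^ 2 - β ^ 2))) := by
  have hα0 : 0 < α := lt_trans (by positivity) hα2
  have hα1 : α ^ 2 < 1 := by nlinarith
  have hαhalf : 1 / 2 < α ^ 2 := by
    have h2 : (0:ℝ) < Real.sqrt 2 := by positivity
    have : 1 / Real.sqrt 2 * (1 / Real.sqrt 2) = 1 / 2 := by
      rw [div_mul_div_comm, one_mul, Real.mul_self_sqrt (by norm_num)]
    have h3 := mul_lt_mul'' hα2 hα2 (by positivity) (by positivity)
    nlinarith
  have hβ2 : β ^ 2 = 1 - α ^ 2 := by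
    rw [hβ, Real.sq_sqrt (by linarith)]
  have ht : α ^ 2 - β ^ 2 = 2 * α ^ 2 - 1 := by rw [hβ2]; ring
  set t : ℝ := α ^ 2 - β ^ 2 with htdef
  have ht0 : 0 < t := by rw [ht]; linarith
  have ht1 : t < 1 := by rw [ht]; linarith
  set Pf : ℝ := t ^ (N - 1) with hPf
  have hPf0 : 0 ≤ Pf := pow_nonneg ht0.le _
  have hPf1 : Pf ≤ 1 := pow_le_one₀ ht0.le ht1.le
  have hPft : Pf * t ≤ 1 := by nlinarith
  have hc0 : (0:ℝ) ≤ 1 / 2 * (1 - Pf) + α ^ 2 * Pf := by nlinarith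
  have hc1 : (0:ℝ) ≤ 1 / 2 * (1 - Pf) + β ^ 2 * Pf := by nlinarith [sq_nonneg β]
  have hhalf : ((1/2 : ℝ) : ℂ) = (1/2 : ℂ) := by norm_num
  have e00 : σdist α β N 0 0 = ((1 / 2 * (1 - Pf) + α ^ 2 * Pf : ℝ) : ℂ) • P00 := by
    simp only [σdist]
    norm_num
    congr 1
    norm_cast
  have e10 : σdist α β N 1 0 = ((1 / 2 * (1 - Pf) + β ^ 2 * Pf : ℝ) : ℂ) • P11 := by
    simp only [σdist]
    norm_num
    congr 1
    norm_cast
  have f00 : σΦ 0 0 = ((1/2 : ℝ) : ℂ) • P00 := by simp [σΦ, hhalf]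
  have f10 : σΦ 1 0 = ((1/2 : ℝ) : ℂ) • P11 := by simp [σΦ, hhalf]
  rw [Fin.sum_univ_two, e00, e10, f00, f10,
    mFid_proj P00_psd P00_mul P00_trace hc0 (by norm_num),
    mFid_proj P11_psd P11_mul P11_trace hc1 (by norm_num)]
  have ha : (1 / 2 * (1 - Pf) + α ^ 2 * Pf) * (1/2) = (1/2)^2 * (1 + Pf * t) := by
    rw [ht]; ring
  have hb : (1 / 2 * (1 - Pf) + β ^ 2 * Pf) * (1/2) = (1/2)^2 * (1 - Pf * t) := by
    have : β ^ 2 = 1 - α ^ 2 := hβ2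
    rw [this, ht]; ring
  rw [ha, hb, Real.sqrt_mul (by positivity) (1 + Pf * t),
    Real.sqrt_mul (by positivity) (1 - Pf * t),
    Real.sqrt_sq (by norm_num : (0:ℝ) ≤ 1/2)]
  ring
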